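/- Fix a real constant λ > 1 and let A = D_a and B = U D_b be the operators on ℓ²(ℤ) with weights a(n) = exp(−λⁿ) for n ≥ 1 even, a(n) = 1 otherwise, and b(n) = exp(−λⁿ) for n ≥ 1 odd, b(n) = 1 otherwise. Let S be the unilateral shift on ℓ²(ℕ), let μ = (μ_n)_{n≥1} be any bounded complex sequence with pairwise distinct entries, let w = (w_n)_{n≥1} be any square-summable sequence with all w_n ≠ 0, and let T = S D_μ + θ_{e₁, w̄}. Then the Kronecker representation (f_α, f_β) = (A, B) on ℓ²(ℤ) is not isomorphic to the Kronecker representation (f_α, f_β) = (S, T) on ℓ²(ℕ): there exist no invertible bounded operators φ₁, φ₂ : ℓ²(ℕ) → ℓ²(ℤ) with φ₂ S = A φ₁ and φ₂ T = B φ₁. (Indeed, the range of S is closed while the range of A is not closed.) -/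

import Mathlib

open scoped ENNReal

noncomputable def evCLM (k : ℕ) : lp (fun _ : ℕ => ℂ) 2 →L[ℂ] ℂ :=
  LinearMap.mkContinuous
    { toFun := fun f => f k
      map_add' := fun f g => by simp [lp.coeFn_add]
      map_smul' := fun c f => by simp [lp.coeFn_smul] }
    1 (fun f => by rw [one_mul]; exact lp.norm_apply_le_norm two_ne_zero f k)

lemma evCLM_apply (k : ℕ) (f : lp (fun _ : ℕ => ℂ) 2) : evCLM k f = f k := rfl

lemma coordS (S : lp (fun _ : ℕ => ℂ) 2 →L[ℂ] lp (fun _ : ℕ => ℂ) 2)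
    (hS : ∀ n : ℕ, S (lp.single 2 n (1 : ℂ)) = lp.single 2 (n + 1) (1 : ℂ))
    (y : lp (fun _ : ℕ => ℂ) 2) (k : ℕ) : (S y : ∀ _ : ℕ, ℂ) (k + 1) = y k := by
  have h1 : HasSum (fun n : ℕ => lp.single 2 n (y n)) y :=
    lp.hasSum_single (by norm_num) y
  have h2 : HasSum (fun n : ℕ => S (lp.single 2 n (y n))) (S y) := S.hasSum h1
  have h3 : HasSum (fun n : ℕ => evCLM (k + 1) (S (lp.single 2 n (y n))))
      (evCLM (k + 1) (S y)) := (evCLM (k + 1)).hasSum h2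
  have key : (fun n : ℕ => evCLM (k + 1) (S (lp.single 2 n (y n))))
      = fun n : ℕ => if n = k then y k else 0 := by
    funext n
    have hsingle : lp.single 2 n (y n) = (y n • lp.single 2 n (1 : ℂ) : lp (fun _ : ℕ => ℂ) 2) := by
      rw [← lp.single_smul]; simp
    have : S (lp.single 2 n (y n)) = y n • lp.single 2 (n + 1) (1 : ℂ) := by
      rw [hsingle, map_smul, hS]
    rw [this, evCLM_apply, lp.coeFn_smul]
    by_cases h : n = k
    · subst h; simp [lp.single_apply_self]
    · rw [if_neg h]
      have : (lp.single 2 (n + 1) (1 : ℂ) : ∀ _ : ℕ, ℂ) (k + 1) = 0 :=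
        lp.single_apply_ne (E := fun _ : ℕ => ℂ) 2 (n + 1) (1 : ℂ) (show k + 1 ≠ n + 1 from fun he => h (by omega))
      simp [this, Pi.single_apply, show k ≠ n from fun he => h he.symm]
  rw [key] at h3
  have h4 : HasSum (fun n : ℕ => if n = k then y k else 0) (y k) := hasSum_ite_eq k (y k)
  exact h3.unique h4

lemma normS (S : lp (fun _ : ℕ => ℂ) 2 →L[ℂ] lp (fun _ : ℕ => ℂ) 2)
    (hS : ∀ n : ℕ, S (lp.single 2 n (1 : ℂ)) = lp.single 2 (n + 1) (1 : ℂ))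
    (y : lp (fun _ : ℕ => ℂ) 2) : ‖y‖ ≤ ‖S y‖ := by
  have hp : (0 : ℝ) < (2 : ℝ≥0∞).toReal := by norm_num
  have hy : HasSum (fun k : ℕ => ‖y k‖ ^ (2 : ℝ≥0∞).toReal) (‖y‖ ^ (2 : ℝ≥0∞).toReal) :=
    lp.hasSum_norm hp y
  have hSy : HasSum (fun m : ℕ => ‖(S y : ∀ _ : ℕ, ℂ) m‖ ^ (2 : ℝ≥0∞).toReal)
      (‖S y‖ ^ (2 : ℝ≥0∞).toReal) := lp.hasSum_norm hp (S y)
  have hle : ‖y‖ ^ (2 : ℝ≥0∞).toReal ≤ ‖S y‖ ^ (2 : ℝ≥0∞).toReal := by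
    refine hasSum_le_inj (fun k => k + 1) (fun a b h => by simpa using h) ?_ ?_ hy hSy
    · intro c _; positivity
    · intro k
      rw [coordS S hS y k]
  exact (Real.rpow_le_rpow_iff (norm_nonneg _) (norm_nonneg _) hp).mp hle


/-- **The Harrison–Radjavi–Rosenthal type representation `(A, B)` on `ℓ²(ℤ)` is not
isomorphic to any rank-one perturbation representation `(S, T)` on `ℓ²(ℕ)`.**
Here `λ > 1`, `A = D_a`, `B = U D_b` are as in the HRR construction; `S` is the
unilateral shift and `T = S D_μ + θ_{e₁, w̄}` is determined by
`T e_n = w_n e₁ + μ_n e_{n+1}`, where `μ` is bounded with pairwise distinct entries and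
`w` is square-summable with all entries non-zero.  There are no invertible bounded
operators `φ₁, φ₂ : ℓ²(ℕ) → ℓ²(ℤ)` with `φ₂ S = A φ₁` and `φ₂ T = B φ₁`. -/
theorem stmt_13 (l : ℝ) (hl : 1 < l)
    (A B : lp (fun _ : ℤ => ℂ) 2 →L[ℂ] lp (fun _ : ℤ => ℂ) 2)
    (hA : ∀ n : ℤ, A (lp.single 2 n (1 : ℂ)) =
      (if 1 ≤ n ∧ Even n then (Real.exp (-(l ^ n.toNat)) : ℂ) else 1) •
        lp.single 2 n (1 : ℂ))
    (hB : ∀ n : ℤ, B (lp.single 2 n (1 : ℂ)) =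
      (if 1 ≤ n ∧ Odd n then (Real.exp (-(l ^ n.toNat)) : ℂ) else 1) •
        lp.single 2 (n + 1) (1 : ℂ))
    (S : lp (fun _ : ℕ => ℂ) 2 →L[ℂ] lp (fun _ : ℕ => ℂ) 2)
    (hS : ∀ n : ℕ, S (lp.single 2 n (1 : ℂ)) = lp.single 2 (n + 1) (1 : ℂ))
    (mu : ℕ → ℂ) (hbdd : ∃ C : ℝ, ∀ n, ‖mu n‖ ≤ C)
    (hdist : ∀ i j : ℕ, i ≠ j → mu i ≠ mu j)
    (w : ℕ → ℂ) (hw : Memℓp w 2) (hwn : ∀ n, w n ≠ 0)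
    (T : lp (fun _ : ℕ => ℂ) 2 →L[ℂ] lp (fun _ : ℕ => ℂ) 2)
    (hT : ∀ n : ℕ, T (lp.single 2 n (1 : ℂ)) =
      w n • lp.single 2 0 (1 : ℂ) + mu n • lp.single 2 (n + 1) (1 : ℂ)) :
    ¬ ∃ φ₁ φ₂ : lp (fun _ : ℕ => ℂ) 2 ≃L[ℂ] lp (fun _ : ℤ => ℂ) 2,
      (∀ x, φ₂ (S x) = A (φ₁ x)) ∧ (∀ x, φ₂ (T x) = B (φ₁ x)) := by
  rintro ⟨φ₁, φ₂, h1, _⟩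
  set C1 := ‖(φ₁ : lp (fun _ : ℕ => ℂ) 2 →L[ℂ] lp (fun _ : ℤ => ℂ) 2)‖ with hC1
  set C2 := ‖(φ₂.symm : lp (fun _ : ℤ => ℂ) 2 →L[ℂ] lp (fun _ : ℕ => ℂ) 2)‖ with hC2
  obtain ⟨m, hm⟩ := pow_unbounded_of_one_lt (max (C1 * C2) 1) hl
  set N := 2 * m + 2 with hN
  have hlN : max (C1 * C2) 1 < l ^ N := by
    refine hm.trans_le (pow_le_pow_right₀ hl.le (by omega))
  -- the basis vector
  set e : lp (fun _ : ℤ => ℂ) 2 := lp.single 2 (N : ℤ) (1 : ℂ) with he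
  have hnorm_e : ‖e‖ = 1 := by
    have := lp.norm_single (E := fun _ : ℤ => ℂ) (by norm_num : (0:ℝ≥0∞) < 2)
      (N : ℤ) (1 : ℂ)
    simpa [he] using this
  have hcond : (1 ≤ (N : ℤ) ∧ Even ((N : ℤ))) := by
    constructor
    · exact_mod_cast Nat.one_le_iff_ne_zero.mpr (by omega)
    · exact ⟨(m : ℤ) + 1, by rw [hN]; push_cast; ring⟩
  have htoNat : ((N : ℤ)).toNat = N := Int.toNat_natCast N
  have hAe : A e = ((Real.exp (-(l ^ N)) : ℝ) : ℂ) • e := by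
    rw [he, hA, if_pos hcond, htoNat]
  set x := φ₁.symm e with hx
  have hφx : φ₁ x = e := φ₁.apply_symm_apply e
  have hSx : S x = ((Real.exp (-(l ^ N)) : ℝ) : ℂ) • φ₂.symm e := by
    have h := h1 x
    rw [hφx, hAe] at h
    have := congrArg φ₂.symm h
    rw [φ₂.symm_apply_apply] at this
    rw [this, map_smul]
  have key1 : (1 : ℝ) ≤ C1 * ‖x‖ := by
    calc (1 : ℝ) = ‖e‖ := hnorm_e.symm
    _ = ‖φ₁ x‖ := by rw [hφx]
    _ ≤ C1 * ‖x‖ := (φ₁ : lp (fun _ : ℕ => ℂ) 2 →L[ℂ] lp (fun _ : ℤ => ℂ) 2).le_opNorm x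
  have key2 : ‖S x‖ ≤ Real.exp (-(l ^ N)) * (C2 * 1) := by
    rw [hSx, norm_smul]
    have h2 : ‖φ₂.symm e‖ ≤ C2 * ‖e‖ :=
      (φ₂.symm : lp (fun _ : ℤ => ℂ) 2 →L[ℂ] lp (fun _ : ℕ => ℂ) 2).le_opNorm e
    rw [hnorm_e] at h2
    have h3 : ‖(((Real.exp (-(l ^ N)) : ℝ) : ℂ))‖ = Real.exp (-(l ^ N)) := by
      rw [Complex.norm_real, Real.norm_eq_abs, abs_of_pos (Real.exp_pos _)]
    rw [h3]
    exact mul_le_mul_of_nonneg_left (by simpa using h2) (Real.exp_pos _).le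
  have hxle : ‖x‖ ≤ ‖S x‖ := normS S hS x
  -- combine
  have hC1nn : 0 ≤ C1 := norm_nonneg _
  have hfinal : (1 : ℝ) ≤ C1 * C2 * Real.exp (-(l ^ N)) := by
    calc (1 : ℝ) ≤ C1 * ‖x‖ := key1
    _ ≤ C1 * ‖S x‖ := mul_le_mul_of_nonneg_left hxle hC1nn
    _ ≤ C1 * (Real.exp (-(l ^ N)) * (C2 * 1)) := mul_le_mul_of_nonneg_left key2 hC1nn
    _ = C1 * C2 * Real.exp (-(l ^ N)) := by ring
  -- but RHS < 1
  have hCC : C1 * C2 < Real.exp (l ^ N) := by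
    calc C1 * C2 ≤ max (C1 * C2) 1 := le_max_left _ _
    _ < l ^ N := hlN
    _ < Real.exp (l ^ N) := by
        have := Real.add_one_le_exp (l ^ N)
        linarith
  have hlt : C1 * C2 * Real.exp (-(l ^ N)) < 1 := by
    rw [Real.exp_neg]
    rw [mul_inv_lt_iff₀ (Real.exp_pos _)]
    simpa using hCC
  linarith
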